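/- If |M| ≥ 3 and |W| ≥ 3, then there exists a preference profile q̄ ∈ P(M)^W for the women over the men such that no q̄-stable one-side-querying matching rule is OSP-implementable. -/

import Mathlib

/-- A preference list over `α` (a totally ordered subset of `α`), represented as a
duplicate-free list, most-preferred member first. Members of `α` not on the list
are unranked (unacceptable). -/
abbrev PrefList (α : Type) : Type := {l : List α // l.Nodup}

/-- `x ≻ y` according to `p`: `x` is ranked above `y` on `p`, or `x` appears on `p`
while `y` does not. -/
def prefers {α : Type} (p : PrefList α) (x y : α) : Prop :=
  [x, y].Sublist p.val ∨ (x ∈ p.val ∧ y ∉ p.val)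

/-- Strict preference over possible outcomes, where `none` means being unmatched:
being matched to someone on one's list is better than being unmatched, which is
better than being matched to someone not on one's list. -/
def outPrefers {α : Type} (p : PrefList α) : Option α → Option α → Prop
  | some x, some y => prefers p x y
  | some x, none => x ∈ p.val
  | none, some y => y ∉ p.val
  | none, none => False

/-- A preference list is full if it ranks every member of the opposite side. -/
def IsFull {α : Type} (p : PrefList α) : Prop := ∀ x : α, x ∈ p.val

/-- A matching between `M` and `W`: a one-to-one mapping between a subset of `M`
and a subset of `W`, recorded as a partial injective function from men to women
(`μ.toFun m = none` meaning that `m` is unmatched). -/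
structure Matching (M W : Type) where
  toFun : M → Option W
  inj : ∀ ⦃m m' : M⦄ ⦃w : W⦄, toFun m = some w → toFun m' = some w → m = m'

/-- Woman `w` strictly prefers man `m` (according to her list `q`) over the partner
matched to her by `μ` (or over remaining unmatched, if `μ` leaves her unmatched). -/
def womanPrefersOver {M W : Type} (q : PrefList M) (μ : Matching M W) (w : W) (m : M) : Prop :=
  (∃ m', μ.toFun m' = some w ∧ prefers q m m') ∨
    ((∀ m', μ.toFun m' ≠ some w) ∧ m ∈ q.val)

/-- `μ` is stable with respect to men's profile `pbar` and women's profile `qbar`: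
there is no man and woman each preferring the other over their match under `μ`, and
no participant is matched with a partner not on their preference list. -/
def IsStable {M W : Type} (pbar : M → PrefList W) (qbar : W → PrefList M)
    (μ : Matching M W) : Prop :=
  ¬ ((∃ m w, outPrefers (pbar m) (some w) (μ.toFun m) ∧ womanPrefersOver (qbar w) μ w m) ∨
     (∃ m w, μ.toFun m = some w ∧ (w ∉ (pbar m).val ∨ m ∉ (qbar w).val)))

/-- `C` is `qbar`-stable: `C pbar` is stable with respect to `pbar` and `qbar` for
every men's profile `pbar`. -/
def IsStableRule {M W : Type} (qbar : W → PrefList M)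
    (C : (M → PrefList W) → Matching M W) : Prop :=
  ∀ pbar, IsStable pbar qbar (C pbar)

/-- `C` is the `M`-optimal stable matching rule `C^qbar`: it maps each men's profile
`pbar` to a stable matching that every man weakly prefers to every stable matching. -/
def IsMOptimalStableRule {M W : Type} (qbar : W → PrefList M)
    (C : (M → PrefList W) → Matching M W) : Prop :=
  ∀ pbar, IsStable pbar qbar (C pbar) ∧
    ∀ μ, IsStable pbar qbar μ → ∀ m, ¬ outPrefers (pbar m) (μ.toFun m) ((C pbar).toFun m)

/-- `C` is strategy-proof for man `m`. -/
def StrategyProofFor {M W : Type} [DecidableEq M]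
    (C : (M → PrefList W) → Matching M W) (m : M) : Prop :=
  ∀ (pbar : M → PrefList W) (p' : PrefList W),
    ¬ outPrefers (pbar m) ((C (Function.update pbar m p')).toFun m) ((C pbar).toFun m)

/-- A women's profile `qbar` is cyclical if there are men `a`, `b`, `c` and women
`x`, `y` with `a ≻ₓ b ≻ₓ c ≻_y a`. -/
def Cyclical {M W : Type} (qbar : W → PrefList M) : Prop :=
  ∃ (a b c : M) (x y : W),
    prefers (qbar x) a b ∧ prefers (qbar x) b c ∧ prefers (qbar y) c a

/-- A one-side-querying extensive-form matching mechanism for `M` over `W`: a rooted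
tree each of whose leaves is labeled by a matching and each of whose internal nodes
queries a man; the edges out of an internal node querying `q` are the fibers of the
function `next` (two preference lists for `q` lie on the same outgoing edge iff they
are routed to the same subtree). -/
inductive Mech (M W : Type) : Type
  | leaf (μ : Matching M W)
  | node (q : M) (next : PrefList W → Mech M W)

/-- The matching rule implemented by a mechanism: route the profile from the root to
a leaf and output that leaf's matching. -/
def Mech.run {M W : Type} : Mech M W → (M → PrefList W) → Matching M W
  | .leaf μ, _ => μ
  | .node q next, pbar => (next (pbar q)).run pbar

/-- Auxiliary definition of obvious strategy-proofness for man `m`: `P` is the set of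
profiles passing through the current node. At each node querying `m`, for all profiles
`pbar`, `pbar'` passing through the node at which `m`'s lists diverge (are routed to
distinct subtrees), the outcome of `pbar'` is not strictly preferred (according to
`pbar m`) to the outcome of `pbar`. -/
def Mech.OSPAux {M W : Type} (m : M) : Mech M W → Set (M → PrefList W) → Prop
  | .leaf _, _ => True
  | .node q next, P =>
      (q = m → ∀ pbar ∈ P, ∀ pbar' ∈ P, next (pbar m) ≠ next (pbar' m) →
        ¬ outPrefers (pbar m) (((next (pbar' m)).run pbar').toFun m)
            (((next (pbar m)).run pbar).toFun m)) ∧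
      ∀ p : PrefList W, Mech.OSPAux m (next p) {pbar ∈ P | next (pbar q) = next p}

/-- `I` is obviously strategy-proof (OSP) for man `m`. -/
def Mech.OSPFor {M W : Type} (I : Mech M W) (m : M) : Prop :=
  Mech.OSPAux m I Set.univ

/-- A matching rule is OSP-implementable if it is implemented by some mechanism that
is OSP for every man. -/
def OSPImplementable {M W : Type} (C : (M → PrefList W) → Matching M W) : Prop :=
  ∃ I : Mech M W, (∀ m : M, I.OSPFor m) ∧ ∀ pbar, I.run pbar = C pbar

/-- A two-sides-querying extensive-form matching mechanism: internal nodes may query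
either a man (about his preference list over `W`) or a woman (about her preference
list over `M`). -/
inductive Mech2 (M W : Type) : Type
  | leaf (μ : Matching M W)
  | nodeM (q : M) (next : PrefList W → Mech2 M W)
  | nodeW (q : W) (next : PrefList M → Mech2 M W)

/-- The two-sides-querying matching rule implemented by a two-sides-querying mechanism. -/
def Mech2.run {M W : Type} :
    Mech2 M W → (M → PrefList W) → (W → PrefList M) → Matching M W
  | .leaf μ, _, _ => μ
  | .nodeM q next, pbar, qbar => (next (pbar q)).run pbar qbar
  | .nodeW q next, pbar, qbar => (next (qbar q)).run pbar qbar

/-- Auxiliary definition of obvious strategy-proofness of a two-sides-querying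
mechanism for man `m`; `P` is the set of two-sided profiles passing through the
current node. -/
def Mech2.OSPAux {M W : Type} (m : M) :
    Mech2 M W → Set ((M → PrefList W) × (W → PrefList M)) → Prop
  | .leaf _, _ => True
  | .nodeM q next, P =>
      (q = m → ∀ r ∈ P, ∀ r' ∈ P, next (r.1 m) ≠ next (r'.1 m) →
        ¬ outPrefers (r.1 m) (((next (r'.1 m)).run r'.1 r'.2).toFun m)
            (((next (r.1 m)).run r.1 r.2).toFun m)) ∧
      ∀ p : PrefList W, Mech2.OSPAux m (next p) {r ∈ P | next (r.1 q) = next p}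
  | .nodeW q next, P =>
      ∀ p : PrefList M, Mech2.OSPAux m (next p) {r ∈ P | next (r.2 q) = next p}

/-- A two-sides-querying mechanism `I` is obviously strategy-proof (OSP) for man `m`. -/
def Mech2.OSPForM {M W : Type} (I : Mech2 M W) (m : M) : Prop :=
  Mech2.OSPAux m I Set.univ
/- ### Auxiliary material for the proof -/

section Helpers

variable {M W : Type}

lemma prefers_of_sublist {α : Type} {q : PrefList α} {u v : α}
    (h : [u, v].Sublist q.val) : prefers q u v := Or.inl h

lemma outPrefers_some_none {α : Type} {p : PrefList α} {u : α} (h : u ∈ p.val) :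
    outPrefers p (some u) none := h

lemma outPrefers_some_some {α : Type} {p : PrefList α} {u v : α} (h : prefers p u v) :
    outPrefers p (some u) (some v) := h

lemma not_outPrefers_self {α : Type} (p : PrefList α) (o : Option α) :
    ¬ outPrefers p o o := by
  cases o with
  | none => exact fun h => h
  | some w =>
    intro h
    have h' : prefers p w w := h
    rcases h' with hs | ⟨h1, h2⟩
    · exact absurd (p.2.sublist hs) (by simp)
    · exact h2 h1

lemma wpo_holder {q : PrefList M} {μ : Matching M W} {w : W} {m m' : M}
    (h1 : μ.toFun m' = some w) (h2 : prefers q m m') : womanPrefersOver q μ w m :=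
  Or.inl ⟨m', h1, h2⟩

lemma wpo_empty {q : PrefList M} {μ : Matching M W} {w : W} {m : M}
    (h1 : ∀ m', μ.toFun m' ≠ some w) (h2 : m ∈ q.val) : womanPrefersOver q μ w m :=
  Or.inr ⟨h1, h2⟩

lemma ne_some_of_eq_none {α : Type} {o : Option α} (h : o = none) (u : α) :
    o ≠ some u := by rw [h]; simp

lemma ne_some_of_eq_some {α : Type} {o : Option α} {v : α} (h : o = some v) {u : α}
    (hne : v ≠ u) : o ≠ some u := by rw [h]; simp [hne]

lemma inj_ne' {μ : Matching M W} {m m' : M} {w : W} (hmm : m ≠ m')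
    (h1 : μ.toFun m = some w) (h2 : μ.toFun m' = some w) : False :=
  hmm (μ.inj h1 h2)

lemma blocked' {pbar : M → PrefList W} {qbar : W → PrefList M} {μ : Matching M W}
    (h : IsStable pbar qbar μ) (m : M) (w : W)
    (h1 : outPrefers (pbar m) (some w) (μ.toFun m))
    (h2 : womanPrefersOver (qbar w) μ w m) : False :=
  h (Or.inl ⟨m, w, h1, h2⟩)

lemma matched_mem' {pbar : M → PrefList W} {qbar : W → PrefList M} {μ : Matching M W}
    (h : IsStable pbar qbar μ) {m : M} {w : W} (hm : μ.toFun m = some w) :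
    w ∈ (pbar m).val := by
  by_contra hw
  exact h (Or.inr ⟨m, w, hm, Or.inl hw⟩)

lemma others_none' {pbar : M → PrefList W} {qbar : W → PrefList M} {μ : Matching M W}
    (h : IsStable pbar qbar μ) (a b c : M)
    (hpo : ∀ m, m ≠ a → m ≠ b → m ≠ c → (pbar m).val = []) :
    ∀ m, m ≠ a → m ≠ b → m ≠ c → μ.toFun m = none := by
  intro m h1 h2 h3
  cases ho : μ.toFun m with
  | none => rfl
  | some w =>
    have hmem := matched_mem' h ho
    rw [hpo m h1 h2 h3] at hmem
    simp at hmem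

lemma no_holder' {μ : Matching M W} (a b c : M)
    (hO : ∀ m, m ≠ a → m ≠ b → m ≠ c → μ.toFun m = none) (w : W)
    (h1 : μ.toFun a ≠ some w) (h2 : μ.toFun b ≠ some w) (h3 : μ.toFun c ≠ some w) :
    ∀ m', μ.toFun m' ≠ some w := by
  intro m'
  by_cases e1 : m' = a
  · subst e1; exact h1
  by_cases e2 : m' = b
  · subst e2; exact h2
  by_cases e3 : m' = c
  · subst e3; exact h3
  rw [hO m' e1 e2 e3]
  simp

lemma matched_range1 {pbar : M → PrefList W} {qbar : W → PrefList M} {μ : Matching M W}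
    (h : IsStable pbar qbar μ) {m : M} {w0 : W} (hm : (pbar m).val = [w0]) :
    μ.toFun m = none ∨ μ.toFun m = some w0 := by
  cases ho : μ.toFun m with
  | none => exact Or.inl rfl
  | some w =>
    right
    have hmem := matched_mem' h ho
    rw [hm] at hmem
    simp at hmem
    rw [hmem]

lemma matched_range2 {pbar : M → PrefList W} {qbar : W → PrefList M} {μ : Matching M W}
    (h : IsStable pbar qbar μ) {m : M} {w0 w1 : W} (hm : (pbar m).val = [w0, w1]) :
    μ.toFun m = none ∨ μ.toFun m = some w0 ∨ μ.toFun m = some w1 := by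
  cases ho : μ.toFun m with
  | none => exact Or.inl rfl
  | some w =>
    right
    have hmem := matched_mem' h ho
    rw [hm] at hmem
    simp at hmem
    rcases hmem with h' | h'
    · exact Or.inl (by rw [h'])
    · exact Or.inr (by rw [h'])

end Helpers
section Profiles

variable {M W : Type} {a b c : M} {x y : W}

/-- Profile (a:[y], b:[x], c:[x]): man `b` is matched with `x`. -/
lemma stableP1 (hab : a ≠ b) (hac : a ≠ c) (hbc : b ≠ c) (hxy : x ≠ y)
    {qbar : W → PrefList M} (hqx : (qbar x).val = [a, b, c]) (hqy : (qbar y).val = [c, b, a])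
    {pbar : M → PrefList W} (hpa : (pbar a).val = [y]) (hpb : (pbar b).val = [x])
    (hpc : (pbar c).val = [x]) (hpo : ∀ m, m ≠ a → m ≠ b → m ≠ c → (pbar m).val = [])
    {μ : Matching M W} (h : IsStable pbar qbar μ) :
    μ.toFun b = some x := by
  have hO := others_none' h a b c hpo
  rcases matched_range1 h hpb with hB | hB
  swap
  · exact hB
  exfalso
  rcases matched_range1 h hpa with hA | hA <;> rcases matched_range1 h hpc with hC | hC
  · exact blocked' h a y (by rw [hA]; exact outPrefers_some_none (by rw [hpa]; simp))
      (wpo_empty (no_holder' a b c hO y (ne_some_of_eq_none hA y) (ne_some_of_eq_none hB y)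
        (ne_some_of_eq_none hC y)) (by rw [hqy]; simp))
  · exact blocked' h a y (by rw [hA]; exact outPrefers_some_none (by rw [hpa]; simp))
      (wpo_empty (no_holder' a b c hO y (ne_some_of_eq_none hA y) (ne_some_of_eq_none hB y)
        (ne_some_of_eq_some hC hxy)) (by rw [hqy]; simp))
  · exact blocked' h b x (by rw [hB]; exact outPrefers_some_none (by rw [hpb]; simp))
      (wpo_empty (no_holder' a b c hO x (ne_some_of_eq_some hA (Ne.symm hxy))
        (ne_some_of_eq_none hB x) (ne_some_of_eq_none hC x)) (by rw [hqx]; simp))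
  · exact blocked' h b x (by rw [hB]; exact outPrefers_some_none (by rw [hpb]; simp))
      (wpo_holder hC (prefers_of_sublist (by rw [hqx]; exact List.sublist_cons_self a [b, c])))

/-- Profile (a:[y], b:[x], c:[x,y]): man `a` is unmatched and `c` is matched with `y`. -/
lemma stableP2 (hab : a ≠ b) (hac : a ≠ c) (hbc : b ≠ c) (hxy : x ≠ y)
    {qbar : W → PrefList M} (hqx : (qbar x).val = [a, b, c]) (hqy : (qbar y).val = [c, b, a])
    {pbar : M → PrefList W} (hpa : (pbar a).val = [y]) (hpb : (pbar b).val = [x])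
    (hpc : (pbar c).val = [x, y]) (hpo : ∀ m, m ≠ a → m ≠ b → m ≠ c → (pbar m).val = [])
    {μ : Matching M W} (h : IsStable pbar qbar μ) :
    μ.toFun a = none ∧ μ.toFun c = some y := by
  have hO := others_none' h a b c hpo
  rcases matched_range1 h hpa with hA | hA <;> rcases matched_range1 h hpb with hB | hB <;>
    rcases matched_range2 h hpc with hC | hC | hC
  · exact (blocked' h a y (by rw [hA]; exact outPrefers_some_none (by rw [hpa]; simp))
      (wpo_empty (no_holder' a b c hO y (ne_some_of_eq_none hA y) (ne_some_of_eq_none hB y)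
        (ne_some_of_eq_none hC y)) (by rw [hqy]; simp))).elim
  · exact (blocked' h a y (by rw [hA]; exact outPrefers_some_none (by rw [hpa]; simp))
      (wpo_empty (no_holder' a b c hO y (ne_some_of_eq_none hA y) (ne_some_of_eq_none hB y)
        (ne_some_of_eq_some hC hxy)) (by rw [hqy]; simp))).elim
  · exact ⟨hA, hC⟩
  · exact (blocked' h a y (by rw [hA]; exact outPrefers_some_none (by rw [hpa]; simp))
      (wpo_empty (no_holder' a b c hO y (ne_some_of_eq_none hA y) (ne_some_of_eq_some hB hxy)
        (ne_some_of_eq_none hC y)) (by rw [hqy]; simp))).elim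
  · exact (inj_ne' hbc hB hC).elim
  · exact ⟨hA, hC⟩
  · exact (blocked' h b x (by rw [hB]; exact outPrefers_some_none (by rw [hpb]; simp))
      (wpo_empty (no_holder' a b c hO x (ne_some_of_eq_some hA (Ne.symm hxy))
        (ne_some_of_eq_none hB x) (ne_some_of_eq_none hC x)) (by rw [hqx]; simp))).elim
  · exact (blocked' h b x (by rw [hB]; exact outPrefers_some_none (by rw [hpb]; simp))
      (wpo_holder hC (prefers_of_sublist
        (by rw [hqx]; exact List.sublist_cons_self a [b, c])))).elim
  · exact (inj_ne' hac hA hC).elim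
  · exact (blocked' h c y (by rw [hC]; exact outPrefers_some_none (by rw [hpc]; simp))
      (wpo_holder hA (prefers_of_sublist
        (by rw [hqy]; exact List.Sublist.cons₂ c (List.sublist_cons_self b [a]))))).elim
  · exact (inj_ne' hbc hB hC).elim
  · exact (inj_ne' hac hA hC).elim

/-- Profile (a:[y], b:[y,x], c:[x]): man `c` is matched with `x`. -/
lemma stableP3 (hab : a ≠ b) (hac : a ≠ c) (hbc : b ≠ c) (hxy : x ≠ y)
    {qbar : W → PrefList M} (hqx : (qbar x).val = [a, b, c]) (hqy : (qbar y).val = [c, b, a])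
    {pbar : M → PrefList W} (hpa : (pbar a).val = [y]) (hpb : (pbar b).val = [y, x])
    (hpc : (pbar c).val = [x]) (hpo : ∀ m, m ≠ a → m ≠ b → m ≠ c → (pbar m).val = [])
    {μ : Matching M W} (h : IsStable pbar qbar μ) :
    μ.toFun c = some x := by
  have hO := others_none' h a b c hpo
  rcases matched_range1 h hpc with hC | hC
  swap
  · exact hC
  exfalso
  rcases matched_range1 h hpa with hA | hA <;> rcases matched_range2 h hpb with hB | hB | hB
  · exact blocked' h a y (by rw [hA]; exact outPrefers_some_none (by rw [hpa]; simp))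
      (wpo_empty (no_holder' a b c hO y (ne_some_of_eq_none hA y) (ne_some_of_eq_none hB y)
        (ne_some_of_eq_none hC y)) (by rw [hqy]; simp))
  · exact blocked' h c x (by rw [hC]; exact outPrefers_some_none (by rw [hpc]; simp))
      (wpo_empty (no_holder' a b c hO x (ne_some_of_eq_none hA x)
        (ne_some_of_eq_some hB (Ne.symm hxy)) (ne_some_of_eq_none hC x)) (by rw [hqx]; simp))
  · exact blocked' h a y (by rw [hA]; exact outPrefers_some_none (by rw [hpa]; simp))
      (wpo_empty (no_holder' a b c hO y (ne_some_of_eq_none hA y) (ne_some_of_eq_some hB hxy)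
        (ne_some_of_eq_none hC y)) (by rw [hqy]; simp))
  · exact blocked' h b x (by rw [hB]; exact outPrefers_some_none (by rw [hpb]; simp))
      (wpo_empty (no_holder' a b c hO x (ne_some_of_eq_some hA (Ne.symm hxy))
        (ne_some_of_eq_none hB x) (ne_some_of_eq_none hC x)) (by rw [hqx]; simp))
  · exact inj_ne' hab hA hB
  · exact blocked' h b y
      (by rw [hB]; exact outPrefers_some_some (prefers_of_sublist
        (by rw [hpb])))
      (wpo_holder hA (prefers_of_sublist (by rw [hqy]; exact List.sublist_cons_self c [b, a])))

/-- Profile (a:[y,x], b:[x], c:[x]): man `a` is matched with `y`. -/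
lemma stableP4 (hab : a ≠ b) (hac : a ≠ c) (hbc : b ≠ c) (hxy : x ≠ y)
    {qbar : W → PrefList M} (hqx : (qbar x).val = [a, b, c]) (hqy : (qbar y).val = [c, b, a])
    {pbar : M → PrefList W} (hpa : (pbar a).val = [y, x]) (hpb : (pbar b).val = [x])
    (hpc : (pbar c).val = [x]) (hpo : ∀ m, m ≠ a → m ≠ b → m ≠ c → (pbar m).val = [])
    {μ : Matching M W} (h : IsStable pbar qbar μ) :
    μ.toFun a = some y := by
  have hO := others_none' h a b c hpo
  rcases matched_range2 h hpa with hA | hA | hA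
  · exfalso
    rcases matched_range1 h hpb with hB | hB <;> rcases matched_range1 h hpc with hC | hC
    · exact blocked' h a x (by rw [hA]; exact outPrefers_some_none (by rw [hpa]; simp))
        (wpo_empty (no_holder' a b c hO x (ne_some_of_eq_none hA x) (ne_some_of_eq_none hB x)
          (ne_some_of_eq_none hC x)) (by rw [hqx]; simp))
    · exact blocked' h a x (by rw [hA]; exact outPrefers_some_none (by rw [hpa]; simp))
        (wpo_holder hC (prefers_of_sublist
          (by rw [hqx]; exact List.Sublist.cons₂ a (List.sublist_cons_self b [c]))))
    · exact blocked' h a x (by rw [hA]; exact outPrefers_some_none (by rw [hpa]; simp))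
        (wpo_holder hB (prefers_of_sublist (by
          rw [hqx]
          exact List.Sublist.cons₂ a (List.Sublist.cons₂ b (List.nil_sublist [c])))))
    · exact inj_ne' hbc hB hC
  · exact hA
  · exfalso
    rcases matched_range1 h hpb with hB | hB <;> rcases matched_range1 h hpc with hC | hC
    · exact blocked' h a y
        (by rw [hA]; exact outPrefers_some_some (prefers_of_sublist
          (by rw [hpa])))
        (wpo_empty (no_holder' a b c hO y (ne_some_of_eq_some hA hxy)
          (ne_some_of_eq_none hB y) (ne_some_of_eq_none hC y)) (by rw [hqy]; simp))
    · exact inj_ne' hac hA hC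
    · exact inj_ne' hab hA hB
    · exact inj_ne' hab hA hB

/-- Profile (a:[y,x], b:[y,x], c:[x,y]): man `b` is unmatched. -/
lemma stableP5 (hab : a ≠ b) (hac : a ≠ c) (hbc : b ≠ c) (hxy : x ≠ y)
    {qbar : W → PrefList M} (hqx : (qbar x).val = [a, b, c]) (hqy : (qbar y).val = [c, b, a])
    {pbar : M → PrefList W} (hpa : (pbar a).val = [y, x]) (hpb : (pbar b).val = [y, x])
    (hpc : (pbar c).val = [x, y]) (hpo : ∀ m, m ≠ a → m ≠ b → m ≠ c → (pbar m).val = [])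
    {μ : Matching M W} (h : IsStable pbar qbar μ) :
    μ.toFun b = none := by
  have hO := others_none' h a b c hpo
  rcases matched_range2 h hpb with hB | hB | hB
  · exact hB
  · -- b matched with y
    exfalso
    rcases matched_range2 h hpa with hA | hA | hA <;> rcases matched_range2 h hpc with hC | hC | hC
    · exact blocked' h a x (by rw [hA]; exact outPrefers_some_none (by rw [hpa]; simp))
        (wpo_empty (no_holder' a b c hO x (ne_some_of_eq_none hA x)
          (ne_some_of_eq_some hB (Ne.symm hxy)) (ne_some_of_eq_none hC x))
          (by rw [hqx]; simp))
    · exact blocked' h a x (by rw [hA]; exact outPrefers_some_none (by rw [hpa]; simp))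
        (wpo_holder hC (prefers_of_sublist
          (by rw [hqx]; exact List.Sublist.cons₂ a (List.sublist_cons_self b [c]))))
    · exact inj_ne' hbc hB hC
    · exact inj_ne' hab hA hB
    · exact inj_ne' hab hA hB
    · exact inj_ne' hab hA hB
    · exact blocked' h c y (by rw [hC]; exact outPrefers_some_none (by rw [hpc]; simp))
        (wpo_holder hB (prefers_of_sublist (by
          rw [hqy]
          exact List.Sublist.cons₂ c (List.Sublist.cons₂ b (List.nil_sublist [a])))))
    · exact inj_ne' hac hA hC
    · exact inj_ne' hbc hB hC
  · -- b matched with x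
    exfalso
    rcases matched_range2 h hpa with hA | hA | hA <;> rcases matched_range2 h hpc with hC | hC | hC
    · exact blocked' h a x (by rw [hA]; exact outPrefers_some_none (by rw [hpa]; simp))
        (wpo_holder hB (prefers_of_sublist (by
          rw [hqx]
          exact List.Sublist.cons₂ a (List.Sublist.cons₂ b (List.nil_sublist [c])))))
    · exact inj_ne' hbc hB hC
    · exact blocked' h a x (by rw [hA]; exact outPrefers_some_none (by rw [hpa]; simp))
        (wpo_holder hB (prefers_of_sublist (by
          rw [hqx]
          exact List.Sublist.cons₂ a (List.Sublist.cons₂ b (List.nil_sublist [c])))))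
    · exact blocked' h b y
        (by rw [hB]; exact outPrefers_some_some (prefers_of_sublist
          (by rw [hpb])))
        (wpo_holder hA (prefers_of_sublist (by rw [hqy]; exact List.sublist_cons_self c [b, a])))
    · exact inj_ne' hbc hB hC
    · exact inj_ne' hac hA hC
    · exact inj_ne' hab hA hB
    · exact inj_ne' hab hA hB
    · exact inj_ne' hab hA hB
end Profiles
/-- The key tree induction: if a stable rule has "obvious" deviation opportunities for
`a`, `b` and `c` on a cube of eight profiles (where the reports of all other men are
fixed), then no mechanism implementing it can be OSP for all of `a`, `b`, `c`. -/
lemma mech_no_osp {M W : Type} (a b c : M)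
    (prof : Bool → Bool → Bool → M → PrefList W)
    (ha : ∀ i j k j' k', prof i j k a = prof i j' k' a)
    (hb : ∀ i j k i' k', prof i j k b = prof i' j k' b)
    (hc : ∀ i j k i' j', prof i j k c = prof i' j' k c)
    (ho : ∀ m, m ≠ a → m ≠ b → m ≠ c → ∀ i j k i' j' k', prof i j k m = prof i' j' k' m)
    (C : (M → PrefList W) → Matching M W)
    (hva : ∃ i j k i' j' k', i ≠ i' ∧
      outPrefers (prof i j k a) ((C (prof i' j' k')).toFun a) ((C (prof i j k)).toFun a))
    (hvb : ∃ i j k i' j' k', j ≠ j' ∧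
      outPrefers (prof i j k b) ((C (prof i' j' k')).toFun b) ((C (prof i j k)).toFun b))
    (hvc : ∃ i j k i' j' k', k ≠ k' ∧
      outPrefers (prof i j k c) ((C (prof i' j' k')).toFun c) ((C (prof i j k)).toFun c))
    (I : Mech M W) :
    ∀ P : Set (M → PrefList W), (∀ i j k, prof i j k ∈ P) →
      Mech.OSPAux a I P → Mech.OSPAux b I P → Mech.OSPAux c I P →
      (∀ i j k, I.run (prof i j k) = C (prof i j k)) → False := by
  induction I with
  | leaf μ =>
    intro P _ _ _ _ hrun
    obtain ⟨i, j, k, i', j', k', _, hout⟩ := hva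
    have e1 := hrun i j k
    have e2 := hrun i' j' k'
    simp only [Mech.run] at e1 e2
    rw [← e1, ← e2] at hout
    exact not_outPrefers_self _ _ hout
  | node q next ih =>
    intro P hmem hOa hOb hOc hrun
    simp only [Mech.OSPAux] at hOa hOb hOc
    by_cases hdiv : ∀ i j k i' j' k', next (prof i j k q) = next (prof i' j' k' q)
    · refine ih (prof true true true q)
        {pbar ∈ P | next (pbar q) = next (prof true true true q)}
        (fun i j k => ⟨hmem i j k, hdiv i j k true true true⟩)
        (hOa.2 (prof true true true q)) (hOb.2 (prof true true true q))
        (hOc.2 (prof true true true q)) ?_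
      intro i j k
      have h0 := hrun i j k
      simp only [Mech.run] at h0
      rw [← hdiv i j k true true true]
      exact h0
    · push_neg at hdiv
      obtain ⟨i0, j0, k0, i1, j1, k1, hne0⟩ := hdiv
      by_cases hqa : q = a
      · rw [hqa] at hne0
        obtain ⟨i, j, k, i', j', k', hii, hout⟩ := hva
        have hft : next (prof false true true a) ≠ next (prof true true true a) := by
          rw [ha i0 j0 k0 true true, ha i1 j1 k1 true true] at hne0
          cases i0 <;> cases i1 <;>
            first
              | exact absurd rfl hne0
              | exact hne0
              | exact fun h' => hne0 h'.symm
        have hkey : next (prof i j k a) ≠ next (prof i' j' k' a) := by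
          rw [ha i j k true true, ha i' j' k' true true]
          cases i <;> cases i' <;>
            first
              | exact absurd rfl hii
              | exact hft
              | exact fun h' => hft h'.symm
        have hn := hOa.1 hqa (prof i j k) (hmem i j k) (prof i' j' k') (hmem i' j' k') hkey
        have e1 := hrun i j k
        have e2 := hrun i' j' k'
        simp only [Mech.run] at e1 e2
        rw [hqa] at e1 e2
        rw [e1, e2] at hn
        exact hn hout
      · by_cases hqb : q = b
        · rw [hqb] at hne0
          obtain ⟨i, j, k, i', j', k', hjj, hout⟩ := hvb
          have hft : next (prof true false true b) ≠ next (prof true true true b) := by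
            rw [hb i0 j0 k0 true true, hb i1 j1 k1 true true] at hne0
            cases j0 <;> cases j1 <;>
              first
                | exact absurd rfl hne0
                | exact hne0
                | exact fun h' => hne0 h'.symm
          have hkey : next (prof i j k b) ≠ next (prof i' j' k' b) := by
            rw [hb i j k true true, hb i' j' k' true true]
            cases j <;> cases j' <;>
              first
                | exact absurd rfl hjj
                | exact hft
                | exact fun h' => hft h'.symm
          have hn := hOb.1 hqb (prof i j k) (hmem i j k) (prof i' j' k') (hmem i' j' k') hkey
          have e1 := hrun i j k
          have e2 := hrun i' j' k'
          simp only [Mech.run] at e1 e2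
          rw [hqb] at e1 e2
          rw [e1, e2] at hn
          exact hn hout
        · by_cases hqc : q = c
          · rw [hqc] at hne0
            obtain ⟨i, j, k, i', j', k', hkk, hout⟩ := hvc
            have hft : next (prof true true false c) ≠ next (prof true true true c) := by
              rw [hc i0 j0 k0 true true, hc i1 j1 k1 true true] at hne0
              cases k0 <;> cases k1 <;>
                first
                  | exact absurd rfl hne0
                  | exact hne0
                  | exact fun h' => hne0 h'.symm
            have hkey : next (prof i j k c) ≠ next (prof i' j' k' c) := by
              rw [hc i j k true true, hc i' j' k' true true]
              cases k <;> cases k' <;>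
                first
                  | exact absurd rfl hkk
                  | exact hft
                  | exact fun h' => hft h'.symm
            have hn := hOc.1 hqc (prof i j k) (hmem i j k) (prof i' j' k') (hmem i' j' k') hkey
            have e1 := hrun i j k
            have e2 := hrun i' j' k'
            simp only [Mech.run] at e1 e2
            rw [hqc] at e1 e2
            rw [e1, e2] at hn
            exact hn hout
          · exact hne0 (by rw [ho q hqa hqb hqc i0 j0 k0 i1 j1 k1])
/-- If `|M| ≥ 3` and `|W| ≥ 3`, then there exists a women's preference
profile `qbar` such that no `qbar`-stable matching rule is OSP-implementable. -/
theorem exists_profile_no_stable_rule_OSPImplementable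
    (M W : Type) [Fintype M] [Fintype W]
    (hM : 3 ≤ Fintype.card M) (hW : 3 ≤ Fintype.card W) :
    ∃ qbar : W → PrefList M,
      ∀ C : (M → PrefList W) → Matching M W,
        IsStableRule qbar C → ¬ OSPImplementable C := by
  classical
  obtain ⟨sM, -, hsM⟩ := Finset.exists_subset_card_eq (s := (Finset.univ : Finset M)) (n := 3) (by simpa using hM)
  obtain ⟨a, b, c, hab, hac, hbc, -⟩ := Finset.card_eq_three.mp hsM
  obtain ⟨sW, -, hsW⟩ := Finset.exists_subset_card_eq (s := (Finset.univ : Finset W)) (n := 3) (by simpa using hW)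
  obtain ⟨x, y, z, hxy, -, -, -⟩ := Finset.card_eq_three.mp hsW
  have nqx : ([a, b, c] : List M).Nodup := by simp [hab, hac, hbc]
  have nqy : ([c, b, a] : List M).Nodup := by simp [Ne.symm hab, Ne.symm hac, Ne.symm hbc]
  have nyx : ([y, x] : List W).Nodup := by simp [Ne.symm hxy]
  have nxy : ([x, y] : List W).Nodup := by simp [hxy]
  have ny : ([y] : List W).Nodup := by simp
  have nx : ([x] : List W).Nodup := by simp
  set qbar : W → PrefList M :=
    fun w => if w = x then ⟨[a, b, c], nqx⟩ else if w = y then ⟨[c, b, a], nqy⟩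
      else ⟨[], List.nodup_nil⟩ with hqdef
  refine ⟨qbar, ?_⟩
  intro C hC hOSP
  have hqx : (qbar x).val = [a, b, c] := by simp [hqdef]
  have hqy : (qbar y).val = [c, b, a] := by simp [hqdef, Ne.symm hxy]
  set pa : Bool → PrefList W := fun i => if i then ⟨[y, x], nyx⟩ else ⟨[y], ny⟩ with hpadef
  set pb : Bool → PrefList W := fun j => if j then ⟨[y, x], nyx⟩ else ⟨[x], nx⟩ with hpbdef
  set pc : Bool → PrefList W := fun k => if k then ⟨[x, y], nxy⟩ else ⟨[x], nx⟩ with hpcdef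
  set prof : Bool → Bool → Bool → M → PrefList W := fun i j k m =>
    if m = a then pa i else if m = b then pb j else if m = c then pc k
      else ⟨[], List.nodup_nil⟩ with hprofdef
  have hprofa : ∀ i j k, prof i j k a = pa i := by intro i j k; simp [hprofdef]
  have hprofb : ∀ i j k, prof i j k b = pb j := by
    intro i j k; simp [hprofdef, Ne.symm hab]
  have hprofc : ∀ i j k, prof i j k c = pc k := by
    intro i j k; simp [hprofdef, Ne.symm hac, Ne.symm hbc]
  have hprofo : ∀ i j k m, m ≠ a → m ≠ b → m ≠ c → (prof i j k m).val = [] := by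
    intro i j k m h1 h2 h3; simp [hprofdef, h1, h2, h3]
  have hpaf : (pa false).val = [y] := by simp [hpadef]
  have hpat : (pa true).val = [y, x] := by simp [hpadef]
  have hpbf : (pb false).val = [x] := by simp [hpbdef]
  have hpbt : (pb true).val = [y, x] := by simp [hpbdef]
  have hpcf : (pc false).val = [x] := by simp [hpcdef]
  have hpct : (pc true).val = [x, y] := by simp [hpcdef]
  -- the five pinned outcomes
  have hP1 : (C (prof false false false)).toFun b = some x :=
    stableP1 hab hac hbc hxy hqx hqy
      (by rw [hprofa]; exact hpaf) (by rw [hprofb]; exact hpbf) (by rw [hprofc]; exact hpcf)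
      (fun m h1 h2 h3 => hprofo false false false m h1 h2 h3) (hC (prof false false false))
  have hP2 : (C (prof false false true)).toFun a = none ∧
      (C (prof false false true)).toFun c = some y :=
    stableP2 hab hac hbc hxy hqx hqy
      (by rw [hprofa]; exact hpaf) (by rw [hprofb]; exact hpbf) (by rw [hprofc]; exact hpct)
      (fun m h1 h2 h3 => hprofo false false true m h1 h2 h3) (hC (prof false false true))
  have hP3 : (C (prof false true false)).toFun c = some x :=
    stableP3 hab hac hbc hxy hqx hqy
      (by rw [hprofa]; exact hpaf) (by rw [hprofb]; exact hpbt) (by rw [hprofc]; exact hpcf)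
      (fun m h1 h2 h3 => hprofo false true false m h1 h2 h3) (hC (prof false true false))
  have hP4 : (C (prof true false false)).toFun a = some y :=
    stableP4 hab hac hbc hxy hqx hqy
      (by rw [hprofa]; exact hpat) (by rw [hprofb]; exact hpbf) (by rw [hprofc]; exact hpcf)
      (fun m h1 h2 h3 => hprofo true false false m h1 h2 h3) (hC (prof true false false))
  have hP5 : (C (prof true true true)).toFun b = none :=
    stableP5 hab hac hbc hxy hqx hqy
      (by rw [hprofa]; exact hpat) (by rw [hprofb]; exact hpbt) (by rw [hprofc]; exact hpct)
      (fun m h1 h2 h3 => hprofo true true true m h1 h2 h3) (hC (prof true true true))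
  -- the three obvious deviations
  have hva : ∃ i j k i' j' k', i ≠ i' ∧
      outPrefers (prof i j k a) ((C (prof i' j' k')).toFun a) ((C (prof i j k)).toFun a) := by
    refine ⟨false, false, true, true, false, false, by simp, ?_⟩
    rw [hP2.1, hP4, hprofa]
    exact outPrefers_some_none (by rw [hpaf]; simp)
  have hvb : ∃ i j k i' j' k', j ≠ j' ∧
      outPrefers (prof i j k b) ((C (prof i' j' k')).toFun b) ((C (prof i j k)).toFun b) := by
    refine ⟨true, true, true, false, false, false, by simp, ?_⟩
    rw [hP5, hP1, hprofb]
    exact outPrefers_some_none (by rw [hpbt]; simp)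
  have hvc : ∃ i j k i' j' k', k ≠ k' ∧
      outPrefers (prof i j k c) ((C (prof i' j' k')).toFun c) ((C (prof i j k)).toFun c) := by
    refine ⟨false, false, true, false, true, false, by simp, ?_⟩
    rw [hP2.2, hP3, hprofc]
    exact outPrefers_some_some (prefers_of_sublist
      (by rw [hpct]))
  obtain ⟨I, hIosp, hIrun⟩ := hOSP
  exact mech_no_osp a b c prof
    (fun i j k j' k' => by rw [hprofa, hprofa])
    (fun i j k i' k' => by rw [hprofb, hprofb])
    (fun i j k i' j' => by rw [hprofc, hprofc])
    (fun m h1 h2 h3 i j k i' j' k' => by simp [hprofdef, h1, h2, h3])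
    C hva hvb hvc I Set.univ (fun _ _ _ => Set.mem_univ _)
    (hIosp a) (hIosp b) (hIosp c) (fun i j k => hIrun _)
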